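/- Let p be a prime number and let k and N be positive integers. If n and m are integers with n ≥ N, m ≥ N, and n ≡ m (mod φ(p^N)), where φ denotes Euler's totient function, then B_n^{(-k)} ≡ B_m^{(-k)} (mod p^N). -/
import Mathlib


/-- Stirling numbers of the second kind. -/
def stirling2 : ℕ → ℕ → ℕ
  | 0, 0 => 1
  | 0, _ + 1 => 0
  | _ + 1, 0 => 0
  | n + 1, m + 1 => (m + 1) * stirling2 n (m + 1) + stirling2 n m

/-- The poly-Bernoulli number `B_n^{(-k)}` with negative upper index `-k`. -/
def polyBernoulliB (k n : ℕ) : ℤ :=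
  (-1 : ℤ) ^ n * ∑ m ∈ Finset.range (n + 1),
    (-1 : ℤ) ^ m * (m.factorial : ℤ) * (stirling2 n m : ℤ) * ((m : ℤ) + 1) ^ k

/-- The poly-Bernoulli number of type C, `C_n^{(-k)}`, with negative upper index `-k`. -/
def polyBernoulliC (k n : ℕ) : ℤ :=
  (-1 : ℤ) ^ n * ∑ m ∈ Finset.range (n + 1),
    (-1 : ℤ) ^ m * (m.factorial : ℤ) * (stirling2 (n + 1) (m + 1) : ℤ) * ((m : ℤ) + 1) ^ k

lemma stirling2_eq_zero : ∀ {n m : ℕ}, n < m → stirling2 n m = 0 := by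
  intro n
  induction n with
  | zero => intro m h; match m, h with | m+1, _ => rfl
  | succ n ih =>
    intro m h
    match m, h with
    | m+1, h =>
      show (m + 1) * stirling2 n (m + 1) + stirling2 n m = 0
      rw [ih (by omega), ih (by omega)]; ring

lemma choose_shift (m j : ℕ) :
    ((j:ℤ)+1) * m.choose (j+1) = ((m:ℤ) - j) * m.choose j := by
  rcases le_or_gt j m with h | h
  · have h2 : ((m.choose (j+1) * (j+1) : ℕ) : ℤ) = ((m.choose j * (m - j) : ℕ) : ℤ) := by
      rw [Nat.choose_succ_right_eq]
    push_cast [h] at h2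
    linarith
  · rw [Nat.choose_eq_zero_of_lt h, Nat.choose_eq_zero_of_lt (by omega)]
    simp

/-- Key identity: `∑ m, (-1)^m m! S(n,m) C(m,j) = (-1)^n j! S(n+1,j+1)`. -/
lemma keyA : ∀ (n j : ℕ),
    ∑ m ∈ Finset.range (n+1),
        (-1:ℤ)^m * m.factorial * stirling2 n m * m.choose j
      = (-1:ℤ)^n * j.factorial * stirling2 (n+1) (j+1) := by
  intro n
  induction n with
  | zero =>
    intro j
    cases j <;> simp [stirling2]
  | succ n ih =>
    intro j
    rw [Finset.sum_range_succ']
    have hzero : (-1:ℤ)^0 * (Nat.factorial 0) * stirling2 (n+1) 0 * (Nat.choose 0 j) = 0 := by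
      show (-1:ℤ)^0 * (Nat.factorial 0) * ((0:ℕ):ℤ) * (Nat.choose 0 j) = 0
      ring
    rw [hzero, add_zero]
    have hsplit : ∀ m ∈ Finset.range (n+1),
        (-1:ℤ)^(m+1) * (m+1).factorial * stirling2 (n+1) (m+1) * (m+1).choose j
        = ((-1:ℤ)^(m+1) * (m+1).factorial * ((m+1) * stirling2 n (m+1)) * (m+1).choose j)
          + ((-1:ℤ)^(m+1) * (m+1).factorial * stirling2 n m * (m+1).choose j) := by
      intro m _
      show (-1:ℤ)^(m+1) * (m+1).factorial * (((m+1) * stirling2 n (m+1) + stirling2 n m : ℕ) : ℤ)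
            * (m+1).choose j = _
      push_cast
      ring
    rw [Finset.sum_congr rfl hsplit, Finset.sum_add_distrib]
    have hshift : ∑ m ∈ Finset.range (n+1),
        (-1:ℤ)^(m+1) * (m+1).factorial * ((m+1) * stirling2 n (m+1)) * (m+1).choose j
        = ∑ m ∈ Finset.range (n+1), (-1:ℤ)^m * m.factorial * m * stirling2 n m * m.choose j := by
      have := Finset.sum_range_succ'
        (fun m => (-1:ℤ)^m * m.factorial * m * stirling2 n m * m.choose j) (n+1)
      rw [Finset.sum_range_succ
        (fun m => (-1:ℤ)^m * m.factorial * m * stirling2 n m * m.choose j) (n+1)] at this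
      simp only [stirling2_eq_zero (Nat.lt_succ_self n)] at this
      push_cast at this ⊢
      rw [show ∑ m ∈ Finset.range (n+1),
          (-1:ℤ)^(m+1) * (m+1).factorial * ((m+1) * stirling2 n (m+1)) * (m+1).choose j
          = ∑ m ∈ Finset.range (n+1),
          (-1:ℤ)^(m+1) * (m+1).factorial * ((m+1):ℤ) * stirling2 n (m+1) * (m+1).choose j from
        Finset.sum_congr rfl (fun m _ => by push_cast; ring)]
      linarith [this]
    rw [hshift, ← Finset.sum_add_distrib]
    match j with
    | 0 =>
      have hterm : ∀ m ∈ Finset.range (n+1),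
          ((-1:ℤ)^m * m.factorial * m * stirling2 n m * m.choose 0
            + (-1:ℤ)^(m+1) * (m+1).factorial * stirling2 n m * (m+1).choose 0)
          = -((-1:ℤ)^m * m.factorial * stirling2 n m * m.choose 0) := by
        intro m _
        rw [Nat.choose_zero_right, Nat.choose_zero_right, Nat.factorial_succ]
        push_cast
        ring
      rw [Finset.sum_congr rfl hterm, Finset.sum_neg_distrib, ih 0]
      show _ = (-1:ℤ)^(n+1) * (Nat.factorial 0) *
        ((0 + 1) * stirling2 (n+1) (0+1) + stirling2 (n+1) 0 : ℕ)
      have h0 : stirling2 (n+1) 0 = 0 := rfl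
      rw [h0]
      push_cast
      ring
    | j+1 =>
      have hterm : ∀ m ∈ Finset.range (n+1),
          ((-1:ℤ)^m * m.factorial * m * stirling2 n m * m.choose (j+1)
            + (-1:ℤ)^(m+1) * (m+1).factorial * stirling2 n m * (m+1).choose (j+1))
          = (-((j:ℤ)+2)) * ((-1:ℤ)^m * m.factorial * stirling2 n m * m.choose (j+1))
            + (-((j:ℤ)+1)) * ((-1:ℤ)^m * m.factorial * stirling2 n m * m.choose j) := by
        intro m _
        rw [Nat.choose_succ_succ, Nat.factorial_succ]
        push_cast
        linear_combination ((-1:ℤ)^m * m.factorial * stirling2 n m) * choose_shift m j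
      rw [Finset.sum_congr rfl hterm, Finset.sum_add_distrib, ← Finset.mul_sum, ← Finset.mul_sum,
        ih (j+1), ih j]
      show _ = (-1:ℤ)^(n+1) * ((j+1).factorial) *
        ((j + 2) * stirling2 (n+1) (j+2) + stirling2 (n+1) (j+1) : ℕ)
      rw [Nat.factorial_succ]
      push_cast
      ring

lemma choose_mul (m j : ℕ) :
    ((m:ℤ)+1) * m.choose j = ((j:ℤ)+1) * ((m.choose j : ℤ) + m.choose (j+1)) := by
  have h : (m+1) * m.choose j = (m.choose j + m.choose (j+1)) * (j+1) := by
    rw [← Nat.choose_succ_succ, ← Nat.add_one_mul_choose_eq]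
  have := congrArg (Nat.cast : ℕ → ℤ) h
  push_cast at this
  linarith

/-- Newton expansion: `(m+1)^k = ∑ j, S(k+1,j+1) j! C(m,j)`. -/
lemma keyB : ∀ (k m : ℕ), ((m:ℤ)+1)^k
    = ∑ j ∈ Finset.range (k+1), (stirling2 (k+1) (j+1) : ℤ) * j.factorial * m.choose j := by
  intro k
  induction k with
  | zero => intro m; simp [stirling2]
  | succ k ih =>
    intro m
    have hsplit : ∀ j ∈ Finset.range (k+2),
        (stirling2 (k+2) (j+1) : ℤ) * j.factorial * m.choose j
        = ((j:ℤ)+1) * stirling2 (k+1) (j+1) * j.factorial * m.choose j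
          + (stirling2 (k+1) j : ℤ) * j.factorial * m.choose j := by
      intro j _
      show (((j+1) * stirling2 (k+1) (j+1) + stirling2 (k+1) j : ℕ) : ℤ) * _ * _ = _
      push_cast; ring
    rw [Finset.sum_congr rfl hsplit, Finset.sum_add_distrib,
      Finset.sum_range_succ
        (fun j => ((j:ℤ)+1) * stirling2 (k+1) (j+1) * j.factorial * m.choose j) (k+1),
      stirling2_eq_zero (show k+1 < k+1+1 by omega),
      Finset.sum_range_succ' (fun j => (stirling2 (k+1) j : ℤ) * j.factorial * m.choose j) (k+1),
      show stirling2 (k+1) 0 = 0 from rfl,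
      pow_succ, ih m, Finset.sum_mul]
    push_cast
    simp only [mul_zero, zero_mul, add_zero, zero_add]
    rw [← Finset.sum_add_distrib]
    refine Finset.sum_congr rfl fun j _ => ?_
    rw [Nat.factorial_succ]
    push_cast
    linear_combination ((stirling2 (k+1) (j+1) : ℤ) * j.factorial) * choose_mul m j

/-- Symmetric closed form for poly-Bernoulli numbers. -/
lemma symmform (k n : ℕ) : polyBernoulliB k n
    = ∑ j ∈ Finset.range (k+1),
        ((j.factorial : ℤ))^2 * stirling2 (n+1) (j+1) * stirling2 (k+1) (j+1) := by
  unfold polyBernoulliB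
  have h1 : ∀ m ∈ Finset.range (n+1),
      (-1:ℤ)^m * m.factorial * stirling2 n m * ((m:ℤ)+1)^k
      = ∑ j ∈ Finset.range (k+1),
          (stirling2 (k+1) (j+1) : ℤ) * j.factorial *
            ((-1:ℤ)^m * m.factorial * stirling2 n m * m.choose j) := by
    intro m _
    rw [keyB k m, Finset.mul_sum]
    exact Finset.sum_congr rfl fun j _ => by ring
  rw [Finset.sum_congr rfl h1, Finset.sum_comm, Finset.mul_sum]
  refine Finset.sum_congr rfl fun j _ => ?_
  rw [← Finset.mul_sum, keyA n j]
  have hsq : (-1:ℤ)^n * (-1:ℤ)^n = 1 := by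
    rw [← pow_add]
    exact Even.neg_one_pow ⟨n, rfl⟩
  linear_combination ((stirling2 (k+1) (j+1) : ℤ) * j.factorial * j.factorial
    * stirling2 (n+1) (j+1)) * hsq

/-- Duality for poly-Bernoulli numbers: `B_n^{(-k)} = B_k^{(-n)}`. -/
lemma polyBernoulliB_symm (k n : ℕ) : polyBernoulliB k n = polyBernoulliB n k := by
  have ext : ∀ a b : ℕ, polyBernoulliB a b
      = ∑ j ∈ Finset.range (b + a + 1),
          ((j.factorial : ℤ))^2 * stirling2 (b+1) (j+1) * stirling2 (a+1) (j+1) := by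
    intro a b
    rw [symmform a b]
    refine Finset.sum_subset (Finset.range_subset_range.mpr (by omega)) ?_
    intro j _ hj
    rw [Finset.mem_range, not_lt] at hj
    rw [stirling2_eq_zero (show a+1 < j+1 by omega)]
    ring
  rw [ext k n, ext n k, show n + k + 1 = k + n + 1 by omega]
  exact Finset.sum_congr rfl fun j _ => by ring

lemma pow_periodic (p N : ℕ) (hp : p.Prime) (a n m : ℕ)
    (hn : N ≤ n) (hm : N ≤ m) (hnm : n ≡ m [MOD (p ^ N).totient]) :
    (a : ZMod (p ^ N)) ^ n = (a : ZMod (p ^ N)) ^ m := by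
  haveI : NeZero (p ^ N) := ⟨pow_ne_zero N hp.ne_zero⟩
  by_cases hdvd : p ∣ a
  · obtain ⟨b, rfl⟩ := hdvd
    have h0 : ∀ l, N ≤ l → ((p * b : ℕ) : ZMod (p ^ N)) ^ l = 0 := by
      intro l hl
      rw [← Nat.cast_pow, ZMod.natCast_eq_zero_iff]
      calc p ^ N ∣ p ^ l := pow_dvd_pow p hl
        _ ∣ (p * b) ^ l := by rw [mul_pow]; exact dvd_mul_right _ _
    rw [h0 n hn, h0 m hm]
  · have hco : a.Coprime (p ^ N) :=
      Nat.Coprime.pow_right N ((Nat.Prime.coprime_iff_not_dvd hp).mpr hdvd).symm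
    have hcast : (a : ZMod (p ^ N)) = ↑(ZMod.unitOfCoprime a hco) :=
      (ZMod.coe_unitOfCoprime a hco).symm
    rw [hcast, ← Units.val_pow_eq_pow_val, ← Units.val_pow_eq_pow_val]
    congr 1
    rw [pow_eq_pow_iff_modEq]
    exact hnm.of_dvd (by rw [← ZMod.card_units_eq_totient]; exact orderOf_dvd_card)

theorem polyBernoulliB_period_prime_pow (p : ℕ) (hp : p.Prime) (k N : ℕ)
    (hk : 0 < k) (hN : 0 < N) (n m : ℕ) (hn : N ≤ n) (hm : N ≤ m)
    (hnm : n ≡ m [MOD (p ^ N).totient]) :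
    polyBernoulliB k n ≡ polyBernoulliB k m [ZMOD ((p : ℤ) ^ N)] := by
  rw [polyBernoulliB_symm k n, polyBernoulliB_symm k m]
  have hmod : ((p : ℤ) ^ N) = ((p ^ N : ℕ) : ℤ) := by push_cast; ring
  rw [hmod, ← ZMod.intCast_eq_intCast_iff]
  unfold polyBernoulliB
  push_cast
  refine congrArg _ (Finset.sum_congr rfl fun j _ => ?_)
  have := pow_periodic p N hp (j + 1) n m hn hm hnm
  push_cast at this
  rw [this]
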